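/- Properly colour the m-dimensional hypercube Q_m as follows: vertices are subsets of {1, …, m}, and for each S ⊆ {1, …, m} and i ∈ S there is an edge between S and S \ {i} of colour i. Then this is a proper edge colouring and Q_m contains no rainbow cycle. -/

import Mathlib

lemma foldr_symmDiff_singleton {m : ℕ} (l : List (Fin m)) (hl : l.Nodup) :
    List.foldr (fun i s => symmDiff {i} s) (∅ : Finset (Fin m)) l = l.toFinset := by
  induction l with
  | nil => simp
  | cons a l ih =>
    have hnd := List.nodup_cons.1 hl
    rw [List.foldr_cons, ih hnd.2]
    have hdisj : Disjoint ({a} : Finset (Fin m)) l.toFinset := by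
      simp [Finset.disjoint_singleton_left, hnd.1]
    rw [hdisj.symmDiff_eq_sup]
    simp [Finset.insert_eq, - Finset.singleton_union]

/-- The proper colouring of the `m`-dimensional hypercube: vertices are subsets of
`{1, …, m}`, and the edge between `S` and `S \ {i}` (for `i ∈ S`) gets colour `i`, i.e.
the colour of an edge is the unique coordinate in which its endpoints differ. This is a
proper edge colouring, and the hypercube contains no rainbow cycle. -/
theorem stmt12 (m : ℕ) (Q : SimpleGraph (Finset (Fin m)))
    (hQ : ∀ A B : Finset (Fin m), Q.Adj A B ↔ (symmDiff A B).card = 1)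
    (c : Sym2 (Finset (Fin m)) → Fin m)
    (hc : ∀ A B : Finset (Fin m), Q.Adj A B → c s(A, B) ∈ symmDiff A B) :
    (∀ e₁ ∈ Q.edgeSet, ∀ e₂ ∈ Q.edgeSet, e₁ ≠ e₂ →
      (∃ v, v ∈ e₁ ∧ v ∈ e₂) → c e₁ ≠ c e₂) ∧
    (∀ (A : Finset (Fin m)) (p : Q.Walk A A), p.IsCycle → ¬ (p.edges.map c).Nodup) := by
  have key : ∀ A B, Q.Adj A B → symmDiff A B = {c s(A, B)} := by
    intro A B hAB
    obtain ⟨a, ha⟩ := Finset.card_eq_one.1 ((hQ A B).1 hAB)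
    have hm := hc A B hAB
    rw [ha] at hm ⊢
    rw [Finset.mem_singleton] at hm
    rw [hm]
  have gen : ∀ e ∈ Q.edgeSet, ∀ v ∈ e, e = s(v, symmDiff v {c e}) := by
    intro e he v hv
    induction e using Sym2.ind with
    | _ x y =>
      have hadj : Q.Adj x y := he
      rcases Sym2.mem_iff.1 hv with rfl | rfl
      · have h := key v y hadj
        rw [← h, symmDiff_symmDiff_cancel_left]
      · have h := key v x hadj.symm
        have hsw : s(v, x) = s(x, v) := Sym2.eq_swap
        rw [hsw] at h
        rw [← h, symmDiff_symmDiff_cancel_left]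
        exact Sym2.eq_swap
  constructor
  · rintro e₁ he₁ e₂ he₂ hne ⟨v, hv₁, hv₂⟩ hcc
    apply hne
    rw [gen e₁ he₁ v hv₁, gen e₂ he₂ v hv₂, hcc]
  · intro A p hp hnodup
    have fold : ∀ {X Y : Finset (Fin m)} (w : Q.Walk X Y),
        List.foldr (fun i s => symmDiff {i} s) (∅ : Finset (Fin m)) (w.edges.map c)
          = symmDiff X Y := by
      intro X Y w
      induction w with
      | nil => simp
      | cons h w ih =>
        simp only [SimpleGraph.Walk.edges_cons, List.map_cons, List.foldr_cons, ih]
        rw [← key _ _ h, symmDiff_assoc, symmDiff_symmDiff_cancel_left]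
    have h1 := fold p
    rw [symmDiff_self, foldr_symmDiff_singleton _ hnodup] at h1
    rw [Finset.bot_eq_empty, List.toFinset_eq_empty_iff] at h1
    have h3 : p.edges = [] := List.map_eq_nil_iff.1 h1
    have h4 := hp.three_le_length
    rw [← SimpleGraph.Walk.length_edges, h3] at h4
    simp at h4
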